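/- Let d ≥ 1 be an integer. Every set F ⊆ ℤ that contains an SG_d-set (i.e. F ⊇ SG_d(P) for some infinite sequence P in ℤ) is a Poincaré recurrence set of order d. Moreover, every set F ⊆ ℤ such that for every k ≥ 1 there is a finite sequence P of length at least k in ℤ with SG_d(P) ⊆ F is a Poincaré recurrence set of order d. -/

import Mathlib

open scoped Classical
open MeasureTheory Filter Topology

noncomputable section

/-- Integer iterate of a bijection `T` of a set: `zIter T n = T^n`. -/
def zIter {X : Type*} (T : Equiv.Perm X) (n : ℤ) : X → X := ⇑(T ^ n)

/-- Integer iterate of a homeomorphism. -/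
def hIter {X : Type*} [TopologicalSpace X] (T : X ≃ₜ X) (n : ℤ) : X → X :=
  zIter T.toEquiv n

/-- The integer nearest to `a`, with ties broken towards the smaller integer.
This is the `⌈·⌉` of the paper. -/
def nearInt (a : ℝ) : ℤ := if a - (⌊a⌋ : ℝ) ≤ 1/2 then ⌊a⌋ else ⌈a⌉

/-- The distance from `a` to the nearest integer, i.e. `‖a‖` in the paper. -/
def distInt (a : ℝ) : ℝ := |a - (nearInt a : ℝ)|

/-- Generalized polynomials of degree at most `d` (for `d ≥ 1`):
`GP 1` is the smallest collection of functions `ℤ → ℝ` containing `n ↦ a n`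
and closed under taking the nearest integer, scalar multiplication and finite sums;
`GP d` moreover contains every `GP e` for `e < d` and all functions
`n ↦ a₀ n^{p₀} ⌈f₁(n)⌉ ⋯ ⌈f k (n)⌉` with `f l ∈ GP (p l)` and `p₀ + ∑ p l = d`. -/
inductive GP : ℕ → (ℤ → ℝ) → Prop
  | lin (a : ℝ) : GP 1 (fun n => a * n)
  | mono {d : ℕ} (hd : 1 ≤ d) (a₀ : ℝ) (p₀ : ℕ) {k : ℕ} (p : Fin k → ℕ)
      (f : Fin k → ℤ → ℝ) (hf : ∀ l, GP (p l) (f l)) (hsum : p₀ + ∑ l, p l = d) :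
      GP d (fun n => a₀ * (n : ℝ) ^ p₀ * ∏ l, (nearInt (f l n) : ℝ))
  | incl {d e : ℕ} (hed : e < d) {f : ℤ → ℝ} (hf : GP e f) : GP d f
  | ceil {d : ℕ} {f : ℤ → ℝ} (hf : GP d f) : GP d (fun n => (nearInt (f n) : ℝ))
  | smul {d : ℕ} (c : ℝ) {f : ℤ → ℝ} (hf : GP d f) : GP d (fun n => c * f n)
  | add {d : ℕ} {f g : ℤ → ℝ} (hf : GP d f) (hg : GP d g) : GP d (fun n => f n + g n)

/-- The bracket expression `L(a₁, …, a_ℓ) = a₁⌈L(a₂, …, a_ℓ)⌉`, `L(a) = a`. -/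
def Lfun : List ℝ → ℝ
  | [] => 0
  | [a] => a
  | a :: b :: rest => a * (nearInt (Lfun (b :: rest)) : ℝ)

/-- Special generalized polynomials of degree at most `d`:
the functions `n ↦ L(n^{j₁} a₁, …, n^{j_ℓ} a_ℓ)` with `1 ≤ ℓ`, `j t ≥ 1`, `∑ j t ≤ d`. -/
def SGP (d : ℕ) (g : ℤ → ℝ) : Prop :=
  ∃ ℓ : ℕ, 1 ≤ ℓ ∧ ∃ (a : Fin ℓ → ℝ) (j : Fin ℓ → ℕ),
    (∀ t, 1 ≤ j t) ∧ (∑ t, j t) ≤ d ∧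
    g = fun n : ℤ => Lfun (List.ofFn fun t => (n : ℝ) ^ (j t) * a t)

/-- `FS({n i}) = {n_{i₁} + ⋯ + n_{i_k} : i₁ < ⋯ < i_k}`, the set of finite sums. -/
def FS {d : ℕ} (n : Fin d → ℤ) : Set ℤ :=
  { m | ∃ I : Finset (Fin d), I.Nonempty ∧ m = ∑ i ∈ I, n i }

/-- `SG d P`: sums `p_{i₁} + ⋯ + p_{i_k}` over strictly increasing finite index
sequences whose consecutive gaps are at most `d` (infinite sequence `P`). -/
def SG (d : ℕ) (P : ℕ → ℤ) : Set ℤ :=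
  { n | ∃ k : ℕ, ∃ i : Fin (k + 1) → ℕ, StrictMono i ∧
      (∀ t : Fin k, i t.succ - i t.castSucc ≤ d) ∧ n = ∑ t, P (i t) }

/-- `SGfin d P` : the same for a finite sequence `P` of length `m`. -/
def SGfin (d : ℕ) {m : ℕ} (P : Fin m → ℤ) : Set ℤ :=
  { n | ∃ k : ℕ, ∃ i : Fin (k + 1) → Fin m, StrictMono i ∧
      (∀ t : Fin k, (i t.succ : ℕ) - (i t.castSucc : ℕ) ≤ d) ∧ n = ∑ t, P (i t) }

/-- A set of integers is syndetic if it has bounded gaps. -/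
def Syndetic (A : Set ℤ) : Prop :=
  ∃ N : ℕ, ∀ i : ℤ, ∃ j, i ≤ j ∧ j ≤ i + N ∧ j ∈ A

/-- `F` has positive upper Banach density. -/
def PosUpperBanachDensity (F : Set ℤ) : Prop :=
  ∃ δ : ℝ, 0 < δ ∧ ∀ N : ℕ, ∃ (a : ℤ) (L : ℕ), N ≤ L ∧ 1 ≤ L ∧
    δ * L ≤ ((Finset.Icc a (a + L - 1)).filter (fun x => x ∈ F)).card

/-- A set `A ⊆ ℤ` contains finite IP-sets of arbitrarily long lengths. -/
def ContainsArbLongFIP (A : Set ℤ) : Prop :=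
  ∀ k : ℕ, 1 ≤ k → ∃ p : Fin k → ℤ, FS p ⊆ A

/-- A topological dynamical system `(X, T)` is minimal: every orbit is dense. -/
def MinimalTDS {X : Type*} [TopologicalSpace X] (T : X ≃ₜ X) : Prop :=
  ∀ x : X, Dense (Set.range fun n : ℤ => hIter T n x)

/-- `Nset T x U = N(x, U) = {n ∈ ℤ : Tⁿ x ∈ U}`. -/
def Nset {X : Type*} [TopologicalSpace X] (T : X ≃ₜ X) (x : X) (U : Set X) : Set ℤ :=
  { n : ℤ | hIter T n x ∈ U }

/-- The regionally proximal relation of order `d`. -/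
def RPd {X : Type*} [MetricSpace X] (T : X ≃ₜ X) (d : ℕ) (x y : X) : Prop :=
  ∀ δ : ℝ, 0 < δ → ∃ (x' y' : X) (n : Fin d → ℤ),
    dist x x' < δ ∧ dist y y' < δ ∧
    ∀ ε : Finset (Fin d), ε.Nonempty →
      dist (hIter T (∑ i ∈ ε, n i) x') (hIter T (∑ i ∈ ε, n i) y') < δ

/-- `S` is a set of `d`-topological recurrence. -/
def TopRecSet (d : ℕ) (S : Set ℤ) : Prop :=
  ∀ (X : Type) [MetricSpace X] [CompactSpace X] (T : X ≃ₜ X), MinimalTDS T →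
    ∀ U : Set X, IsOpen U → U.Nonempty →
      ∃ n ∈ S, (⋂ j ∈ Finset.range (d + 1), hIter T ((j : ℤ) * n) ⁻¹' U).Nonempty

/-- `S` is a set of `d`-recurrence (measurable recurrence). -/
def MeasRecSet (d : ℕ) (S : Set ℤ) : Prop :=
  ∀ (Y : Type) [MeasurableSpace Y] [StandardBorelSpace Y]
    (μ : Measure Y) [IsProbabilityMeasure μ] (T : Y ≃ᵐ Y),
    MeasurePreserving (⇑T) μ μ →
    ∀ A : Set Y, MeasurableSet A → 0 < μ A →
      ∃ n ∈ S, 0 < μ (⋂ j ∈ Finset.range (d + 1), zIter T.toEquiv ((j : ℤ) * n) ⁻¹' A)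

/-- `P` is a Birkhoff recurrence set of order `d`. -/
def BirkhoffRecSet (d : ℕ) (P : Set ℤ) : Prop :=
  ∀ (X : Type) [MetricSpace X] [CompactSpace X] (T : X ≃ₜ X), MinimalTDS T →
    ∀ U : Set X, IsOpen U → U.Nonempty →
      ∃ n : Fin d → ℤ, FS n ⊆ P ∧ (U ∩ ⋂ m ∈ FS n, hIter T m ⁻¹' U).Nonempty

/-- `F` is a Poincaré recurrence set of order `d`. -/
def PoincareRecSet (d : ℕ) (F : Set ℤ) : Prop :=
  ∀ (Y : Type) [MeasurableSpace Y] [StandardBorelSpace Y]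
    (μ : Measure Y) [IsProbabilityMeasure μ] (T : Y ≃ᵐ Y),
    MeasurePreserving (⇑T) μ μ →
    ∀ A : Set Y, MeasurableSet A → 0 < μ A →
      ∃ n : Fin d → ℤ, FS n ⊆ F ∧ 0 < μ (A ∩ ⋂ m ∈ FS n, zIter T.toEquiv m ⁻¹' A)

/-- The upper unitriangular matrix `M(a)` with entries `(M(a))_{i, i+k} = a i k`
(1-based indexing). -/
def Mmat (d : ℕ) (a : ℕ → ℕ → ℝ) : Matrix (Fin (d + 1)) (Fin (d + 1)) ℝ :=
  fun r c =>
    if (r : ℕ) = (c : ℕ) then 1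
    else if (r : ℕ) < (c : ℕ) then a ((r : ℕ) + 1) ((c : ℕ) - (r : ℕ)) else 0

/-- `P_ℓ(a; i, k) = ∑ a_i^{s₁} a_{i+s₁}^{s₂} ⋯`, sum over `(s₁,…,s_ℓ) ∈ {1,…,k}^ℓ`
with `s₁ + ⋯ + s_ℓ = k`. -/
def Ppoly (a : ℕ → ℕ → ℝ) (i k ℓ : ℕ) : ℝ :=
  ∑ s ∈ Finset.univ.filter (fun s : Fin ℓ → Fin k => (∑ t, ((s t : ℕ) + 1)) = k),
    ∏ t : Fin ℓ,
      a (i + ∑ u ∈ Finset.univ.filter (fun u : Fin ℓ => u < t), ((s u : ℕ) + 1))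
        ((s t : ℕ) + 1)

/-- The upper unitriangular matrix with superdiagonal `α₁, …, α_d` (1-based). -/
def Amat (d : ℕ) (α : ℕ → ℝ) : Matrix (Fin (d + 1)) (Fin (d + 1)) ℝ :=
  fun r c =>
    if (r : ℕ) = (c : ℕ) then 1
    else if (c : ℕ) = (r : ℕ) + 1 then α ((r : ℕ) + 1) else 0

end


section Infra

set_option linter.unusedSectionVars false

open scoped ENNReal
open MeasureTheory

variable {Y : Type*} [MeasurableSpace Y]

lemma zIter_preimage_comp (T : Equiv.Perm Y) (a b : ℤ) (s : Set Y) :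
    zIter T a ⁻¹' (zIter T b ⁻¹' s) = zIter T (a + b) ⁻¹' s := by
  ext x
  simp only [Set.mem_preimage, zIter]
  rw [add_comm, zpow_add, Equiv.Perm.mul_apply]

lemma zIter_zero_preimage (T : Equiv.Perm Y) (s : Set Y) :
    zIter T 0 ⁻¹' s = s := by
  simp [zIter]

lemma mp_zIter {μ : Measure Y} (T : Y ≃ᵐ Y) (hT : MeasurePreserving ⇑T μ μ) (c : ℤ) :
    MeasurePreserving (zIter T.toEquiv c) μ μ := by
  have key : ∀ n : ℕ, ∃ E : Y ≃ᵐ Y, ⇑E = ⇑(T.toEquiv ^ n) ∧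
      MeasurePreserving ⇑E μ μ ∧ MeasurePreserving ⇑E.symm μ μ ∧
      ⇑E.symm = ⇑((T.toEquiv ^ n)⁻¹) := by
    intro n
    induction n with
    | zero =>
      refine ⟨MeasurableEquiv.refl Y, ?_, MeasurePreserving.id μ, MeasurePreserving.id μ, ?_⟩
      · ext x; simp
      · ext x; simp
    | succ n ih =>
      obtain ⟨E, hE, hmp, hmps, hEs⟩ := ih
      refine ⟨T.trans E, ?_, hmp.comp hT, ?_, ?_⟩
      · ext x
        simp [pow_succ, Equiv.Perm.mul_apply, ← hE]
      · have : MeasurePreserving ⇑(T.trans E).symm μ μ :=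
          MeasurePreserving.symm _ (hmp.comp hT)
        exact this
      · have h1 : ⇑(T.toEquiv ^ (n+1))⁻¹ = ⇑T.toEquiv⁻¹ ∘ ⇑(T.toEquiv ^ n)⁻¹ := by
          rw [pow_succ, mul_inv_rev, Equiv.Perm.coe_mul]
        rw [h1, ← hEs]
        rfl
  cases c with
  | ofNat n =>
    obtain ⟨E, hE, hmp, _, _⟩ := key n
    have : zIter T.toEquiv (Int.ofNat n) = ⇑E := by
      rw [hE]; unfold zIter; norm_num [zpow_natCast]
    rw [this]; exact hmp
  | negSucc n =>
    obtain ⟨E, _, _, hmps, hEs⟩ := key (n+1)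
    have : zIter T.toEquiv (Int.negSucc n) = ⇑E.symm := by
      rw [hEs]; unfold zIter; rw [zpow_negSucc]
    rw [this]; exact hmps

lemma bonferroni (μ : Measure Y) {ι : Type*} [DecidableEq ι] (s : Finset ι)
    (C : ι → Set Y) (hC : ∀ i, MeasurableSet (C i)) :
    ∑ i ∈ s, μ (C i) ≤ μ (⋃ i ∈ s, C i) + ∑ p ∈ s.offDiag, μ (C p.1 ∩ C p.2) := by
  induction s using Finset.induction with
  | empty => simp
  | insert _ _ ha _ =>
    rename_i a s ih
    have hUmeas : MeasurableSet (⋃ i ∈ s, C i) := s.measurableSet_biUnion (fun i _ => hC i)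
    have h1 : μ (C a) + μ (⋃ i ∈ s, C i)
        = μ (C a ∪ ⋃ i ∈ s, C i) + μ (C a ∩ ⋃ i ∈ s, C i) :=
      (measure_union_add_inter _ hUmeas).symm
    have h2 : μ (C a ∩ ⋃ i ∈ s, C i) ≤ ∑ i ∈ s, μ (C a ∩ C i) := by
      have : C a ∩ ⋃ i ∈ s, C i = ⋃ i ∈ s, (C a ∩ C i) := by
        ext x; simp only [Set.mem_iUnion, Set.mem_inter_iff, Set.mem_setOf_eq]; tauto
      rw [this]
      exact measure_biUnion_finset_le s _
    have h3 : ∑ p ∈ s.offDiag, μ (C p.1 ∩ C p.2) + ∑ i ∈ s, μ (C a ∩ C i)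
        ≤ ∑ p ∈ (insert a s).offDiag, μ (C p.1 ∩ C p.2) := by
      have hsub : s.offDiag ∪ ({a} ×ˢ s) ⊆ (insert a s).offDiag := by
        intro p hp
        rcases Finset.mem_union.1 hp with h | h
        · rcases Finset.mem_offDiag.1 h with ⟨h1, h2, h3⟩
          exact Finset.mem_offDiag.2 ⟨Finset.mem_insert_of_mem h1,
            Finset.mem_insert_of_mem h2, h3⟩
        · rcases Finset.mem_product.1 h with ⟨h1, h2⟩
          have hp1 : p.1 = a := Finset.mem_singleton.1 h1
          refine Finset.mem_offDiag.2 ⟨by simp [hp1], Finset.mem_insert_of_mem h2, ?_⟩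
          intro heq
          have : a = p.2 := by rw [← hp1, heq]
          rw [← this] at h2
          exact ha h2
      have hdisj : Disjoint s.offDiag ({a} ×ˢ s) := by
        rw [Finset.disjoint_left]
        intro p hp hp'
        rcases Finset.mem_product.1 hp' with ⟨h1, _⟩
        have hp1 : p.1 = a := Finset.mem_singleton.1 h1
        exact ha (hp1 ▸ (Finset.mem_offDiag.1 hp).1)
      calc ∑ p ∈ s.offDiag, μ (C p.1 ∩ C p.2) + ∑ i ∈ s, μ (C a ∩ C i)
          = ∑ p ∈ s.offDiag ∪ ({a} ×ˢ s), μ (C p.1 ∩ C p.2) := by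
            rw [Finset.sum_union hdisj, Finset.singleton_product, Finset.sum_map]
            rfl
        _ ≤ _ := Finset.sum_le_sum_of_subset hsub
    calc ∑ i ∈ insert a s, μ (C i) = μ (C a) + ∑ i ∈ s, μ (C i) := Finset.sum_insert ha
      _ ≤ μ (C a) + (μ (⋃ i ∈ s, C i) + ∑ p ∈ s.offDiag, μ (C p.1 ∩ C p.2)) := by
          exact add_le_add_right ih _
      _ = (μ (C a) + μ (⋃ i ∈ s, C i)) + ∑ p ∈ s.offDiag, μ (C p.1 ∩ C p.2) := by ring
      _ = (μ (C a ∪ ⋃ i ∈ s, C i) + μ (C a ∩ ⋃ i ∈ s, C i))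
            + ∑ p ∈ s.offDiag, μ (C p.1 ∩ C p.2) := by rw [h1]
      _ ≤ μ (C a ∪ ⋃ i ∈ s, C i) + (∑ p ∈ s.offDiag, μ (C p.1 ∩ C p.2)
            + ∑ i ∈ s, μ (C a ∩ C i)) := by
          rw [add_assoc]
          refine add_le_add_right ?_ _
          rw [add_comm (∑ p ∈ s.offDiag, _)]
          exact add_le_add_left h2 _
      _ ≤ μ (⋃ i ∈ insert a s, C i) + ∑ p ∈ (insert a s).offDiag, μ (C p.1 ∩ C p.2) := by
          refine add_le_add ?_ h3
          refine measure_mono ?_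
          intro x hx
          simp only [Set.mem_iUnion, Set.mem_union] at *
          rcases hx with h | h
          · exact ⟨a, Finset.mem_insert_self a s, h⟩
          · obtain ⟨i, hi, h⟩ := h
            exact ⟨i, Finset.mem_insert_of_mem hi, h⟩

lemma pigeonhole_pairs (μ : Measure Y) [IsProbabilityMeasure μ] {K : ℕ} (hK2 : 2 ≤ K)
    (C : Fin K → Set Y) (hC : ∀ i, MeasurableSet (C i)) (ε : ℝ≥0∞)
    (hε : ∀ i, ε ≤ μ (C i)) (hKε : 2 ≤ (K : ℝ≥0∞) * ε) :
    ∃ i j : Fin K, i < j ∧ (((K : ℝ≥0∞)) ^ 2)⁻¹ ≤ μ (C i ∩ C j) := by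
  by_contra hcon
  push_neg at hcon
  have hall : ∀ p ∈ (Finset.univ : Finset (Fin K)).offDiag,
      μ (C p.1 ∩ C p.2) < (((K : ℝ≥0∞)) ^ 2)⁻¹ := by
    intro p hp
    have hne : p.1 ≠ p.2 := (Finset.mem_offDiag.1 hp).2.2
    rcases lt_or_gt_of_ne hne with h | h
    · exact hcon p.1 p.2 h
    · rw [Set.inter_comm]; exact hcon p.2 p.1 h
  have hsum1 : (2 : ℝ≥0∞) ≤ ∑ i, μ (C i) := by
    calc (2:ℝ≥0∞) ≤ (K : ℝ≥0∞) * ε := hKε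
      _ = (Finset.univ : Finset (Fin K)).card • ε := by
          simp [Finset.card_univ, nsmul_eq_mul]
      _ ≤ ∑ i, μ (C i) := Finset.card_nsmul_le_sum _ _ _ (fun i _ => hε i)
  have hb := bonferroni μ Finset.univ C hC
  have hU : μ (⋃ i ∈ (Finset.univ : Finset (Fin K)), C i) ≤ 1 := prob_le_one
  have hS1 : (1 : ℝ≥0∞) ≤ ∑ p ∈ (Finset.univ : Finset (Fin K)).offDiag,
      μ (C p.1 ∩ C p.2) := by
    by_contra hS1
    push_neg at hS1
    have hlt11 : μ (⋃ i ∈ (Finset.univ : Finset (Fin K)), C i)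
        + ∑ p ∈ (Finset.univ : Finset (Fin K)).offDiag, μ (C p.1 ∩ C p.2) < 1 + 1 :=
      ENNReal.add_lt_add_of_le_of_lt (measure_ne_top _ _) hU hS1
    have : ∑ i, μ (C i) < 1 + 1 := lt_of_le_of_lt hb hlt11
    rw [one_add_one_eq_two] at this
    exact absurd hsum1 (not_le.2 this)
  have hKne : ((K : ℝ≥0∞)) ^ 2 ≠ 0 := by positivity
  have hKnetop : ((K : ℝ≥0∞)) ^ 2 ≠ ⊤ := by
    exact ENNReal.pow_ne_top (ENNReal.natCast_ne_top K)
  have hcard : ((Finset.univ : Finset (Fin K)).offDiag.card : ℝ≥0∞) = (K * K - K : ℕ) := by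
    rw [Finset.offDiag_card]
    simp [Finset.card_univ]
  have hSS2 : ∑ p ∈ (Finset.univ : Finset (Fin K)).offDiag, μ (C p.1 ∩ C p.2)
      ≤ ((K * K - K : ℕ) : ℝ≥0∞) * (((K : ℝ≥0∞)) ^ 2)⁻¹ := by
    calc ∑ p ∈ (Finset.univ : Finset (Fin K)).offDiag, μ (C p.1 ∩ C p.2)
        ≤ (Finset.univ : Finset (Fin K)).offDiag.card • (((K : ℝ≥0∞)) ^ 2)⁻¹ :=
          Finset.sum_le_card_nsmul _ _ _ (fun p hp => le_of_lt (hall p hp))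
      _ = ((K * K - K : ℕ) : ℝ≥0∞) * (((K : ℝ≥0∞)) ^ 2)⁻¹ := by
          rw [nsmul_eq_mul, hcard]
  have hlt : ((K * K - K : ℕ) : ℝ≥0∞) * (((K : ℝ≥0∞)) ^ 2)⁻¹ < 1 := by
    have h1 : ((K * K - K : ℕ) : ℝ≥0∞) < ((K * K : ℕ) : ℝ≥0∞) := by
      rw [Nat.cast_lt]
      have hK0 : 0 < K := by omega
      exact Nat.sub_lt (Nat.mul_pos hK0 hK0) hK0
    have h2 : ((K * K : ℕ) : ℝ≥0∞) * (((K : ℝ≥0∞)) ^ 2)⁻¹ = 1 := by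
      have : ((K * K : ℕ) : ℝ≥0∞) = ((K : ℝ≥0∞)) ^ 2 := by push_cast; ring
      rw [this]
      exact ENNReal.mul_inv_cancel hKne hKnetop
    calc ((K * K - K : ℕ) : ℝ≥0∞) * (((K : ℝ≥0∞)) ^ 2)⁻¹
        < ((K * K : ℕ) : ℝ≥0∞) * (((K : ℝ≥0∞)) ^ 2)⁻¹ := by
          refine ENNReal.mul_lt_mul_left ?_ ?_ h1
          · exact ENNReal.inv_ne_zero.2 hKnetop
          · exact ENNReal.inv_ne_top.2 hKne
      _ = 1 := h2
  exact absurd (le_trans hS1 hSS2) (not_le.2 hlt)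


lemma sg_mem_of_gap {m : ℕ} (P : Fin m → ℤ) (d : ℕ) (U : Finset ℕ) (hne : U.Nonempty)
    (hU : ∀ x ∈ U, x < m)
    (hgap : ∀ x ∈ U, ∀ z ∈ U, x < z → ∃ y ∈ U, x < y ∧ y ≤ x + d) :
    (∑ x ∈ U, (if h : x < m then P ⟨x, h⟩ else 0)) ∈ SGfin d P := by
  classical
  obtain ⟨k, hk⟩ : ∃ k, U.card = k + 1 := by
    have := Finset.card_pos.2 hne
    exact ⟨U.card - 1, by omega⟩
  set e := U.orderIsoOfFin hk with he
  refine ⟨k, fun t => ⟨(e t : ℕ), hU _ (e t).2⟩, ?_, ?_, ?_⟩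
  · intro a b hab
    have h1 : (e a : ℕ) < (e b : ℕ) := Subtype.coe_lt_coe.2 (e.strictMono hab)
    exact h1
  · intro t
    have hab : (e t.castSucc : ℕ) < (e t.succ : ℕ) :=
      Subtype.coe_lt_coe.2 (e.strictMono (Fin.castSucc_lt_succ (i := t)))
    obtain ⟨y, hyU, hxy, hyd⟩ := hgap _ (e t.castSucc).2 _ (e t.succ).2 hab
    have hes : e (e.symm ⟨y, hyU⟩) = ⟨y, hyU⟩ := e.apply_symm_apply _
    have h1 : t.castSucc < e.symm ⟨y, hyU⟩ := by
      rw [← e.lt_iff_lt, hes]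
      exact Subtype.mk_lt_mk.2 hxy
    have h2 : t.succ ≤ e.symm ⟨y, hyU⟩ := Fin.castSucc_lt_iff_succ_le.1 h1
    have h3 : (e t.succ : ℕ) ≤ y := by
      have := e.monotone h2
      rw [hes] at this
      exact Subtype.coe_le_coe.2 this
    simp only
    omega
  · calc ∑ x ∈ U, (if h : x < m then P ⟨x, h⟩ else 0)
        = ∑ x : {x // x ∈ U}, (if h : (x : ℕ) < m then P ⟨(x : ℕ), h⟩ else 0) :=
          (Finset.sum_coe_sort U _).symm
      _ = ∑ t : Fin (k+1), (if h : ((e t : ℕ)) < m then P ⟨(e t : ℕ), h⟩ else 0) :=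
          (Equiv.sum_comp e.toEquiv
            (fun x : {x // x ∈ U} => if h : (x : ℕ) < m then P ⟨(x : ℕ), h⟩ else 0)).symm
      _ = ∑ t : Fin (k+1), P ⟨(e t : ℕ), hU _ (e t).2⟩ := by
          refine Finset.sum_congr rfl (fun t _ => ?_)
          rw [dif_pos (hU _ (e t).2)]

lemma union_gap (d : ℕ) (u v : ℕ → ℕ) (S : Finset ℕ)
    (hSd : ∀ t ∈ S, t < d)
    (hlen : ∀ t ∈ S, u t + d ≤ v t)
    (hnest : ∀ t ∈ S, ∀ t' ∈ S, t ≤ t' → u t ≤ u t' ∧ v t' ≤ v t) :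
    ∀ x ∈ S.biUnion (fun t => (Finset.Ico (u t) (v t)).filter (fun z => z % d = t)),
      ∀ z ∈ S.biUnion (fun t => (Finset.Ico (u t) (v t)).filter (fun z => z % d = t)),
        x < z → ∃ y ∈ S.biUnion (fun t => (Finset.Ico (u t) (v t)).filter (fun z => z % d = t)),
          x < y ∧ y ≤ x + d := by
  classical
  intro x hx z hz hxz
  obtain ⟨t, htS, hxt⟩ := Finset.mem_biUnion.1 hx
  rw [Finset.mem_filter, Finset.mem_Ico] at hxt
  obtain ⟨⟨hx1, hx2⟩, hx3⟩ := hxt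
  have hd0 : 0 < d := lt_of_le_of_lt (Nat.zero_le t) (hSd t htS)
  by_cases hcase : x + d < v t
  · refine ⟨x + d, ?_, by omega, le_rfl⟩
    refine Finset.mem_biUnion.2 ⟨t, htS, Finset.mem_filter.2
      ⟨Finset.mem_Ico.2 ⟨by omega, hcase⟩, by rw [Nat.add_mod_right]; exact hx3⟩⟩
  · set W := (S.biUnion (fun t => (Finset.Ico (u t) (v t)).filter (fun z => z % d = t))).filter
      (fun w => x < w) with hW
    have hzW : z ∈ W := Finset.mem_filter.2 ⟨hz, hxz⟩
    have hWne : W.Nonempty := ⟨z, hzW⟩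
    have hyW : W.min' hWne ∈ W := W.min'_mem hWne
    set y := W.min' hWne with hy
    have hyU := (Finset.mem_filter.1 hyW).1
    have hxy : x < y := (Finset.mem_filter.1 hyW).2
    refine ⟨y, hyU, hxy, ?_⟩
    by_contra hgt
    push_neg at hgt
    obtain ⟨t', ht'S, hyt'⟩ := Finset.mem_biUnion.1 hyU
    rw [Finset.mem_filter, Finset.mem_Ico] at hyt'
    obtain ⟨⟨hy1, hy2⟩, hy3⟩ := hyt'
    rcases le_or_gt t t' with h1 | h2
    · have hvv := (hnest t htS t' ht'S h1).2
      omega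
    · have huu := (hnest t' ht'S t htS (le_of_lt h2)).1
      have hmod : (y - d) % d = t' := by
        have hyd : y = (y - d) + d := by omega
        rw [hyd, Nat.add_mod_right] at hy3
        exact hy3
      have hydU : y - d ∈ S.biUnion
          (fun t => (Finset.Ico (u t) (v t)).filter (fun z => z % d = t)) :=
        Finset.mem_biUnion.2 ⟨t', ht'S, Finset.mem_filter.2
          ⟨Finset.mem_Ico.2 ⟨by omega, by omega⟩, hmod⟩⟩
      have hydW : y - d ∈ W := Finset.mem_filter.2 ⟨hydU, by omega⟩
      have := W.min'_le _ hydW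
      omega

end Infra



/-- The sequence of pigeonhole sizes. -/
def Kseq (K0 : ℕ) : ℕ → ℕ
  | 0 => K0
  | (s+1) => 2 * (Kseq K0 s)^2

section Master

open scoped ENNReal
open MeasureTheory

lemma master (d : ℕ) (hd : 1 ≤ d) (F : Set ℤ)
    (hyp : ∀ k : ℕ, 1 ≤ k → ∃ m : ℕ, k ≤ m ∧ ∃ P : Fin m → ℤ, SGfin d P ⊆ F) :
    PoincareRecSet d F := by
  classical
  intro Y _ _ μ _ T hT A hA hA0
  have hAtop : μ A ≠ ⊤ := measure_ne_top μ A
  have hA0' : μ A ≠ 0 := ne_of_gt hA0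
  obtain ⟨K0', hK0'⟩ := ENNReal.exists_nat_gt (show (2 : ℝ≥0∞) / μ A ≠ ⊤ from by
    rw [div_eq_mul_inv]
    exact ENNReal.mul_ne_top (by norm_num) (ENNReal.inv_ne_top.2 hA0'))
  set K0 : ℕ := K0' + 2 with hK0def
  have hK0 : (2:ℝ≥0∞) ≤ (K0 : ℝ≥0∞) * μ A := by
    have h1 : (2:ℝ≥0∞) / μ A < (K0 : ℝ≥0∞) := lt_of_lt_of_le hK0'
      (by exact_mod_cast Nat.le_add_right K0' 2)
    exact le_of_lt ((ENNReal.div_lt_iff (Or.inl hA0') (Or.inl hAtop)).1 h1)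
  set K : ℕ → ℕ := Kseq K0 with hK
  have hK2 : ∀ s, 2 ≤ K s := by
    intro s
    induction s with
    | zero => show 2 ≤ K0; omega
    | succ s ih =>
      show 2 ≤ 2 * (K s)^2
      nlinarith
  set L : ℕ → ℕ := fun t => d * ∏ r ∈ Finset.Ico t d, K r with hL
  have hLpos : ∀ t, d ≤ L t := by
    intro t
    have hp : 0 < ∏ r ∈ Finset.Ico t d, K r :=
      Finset.prod_pos (fun r _ => by have := hK2 r; omega)
    calc d = d * 1 := (mul_one d).symm
      _ ≤ L t := Nat.mul_le_mul_left d hp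
  have hLd : ∀ t, d ∣ L t := fun t => dvd_mul_right _ _
  have hLsucc : ∀ t, t < d → L t = K t * L (t+1) := by
    intro t ht
    show d * ∏ r ∈ Finset.Ico t d, K r = K t * (d * ∏ r ∈ Finset.Ico (t+1) d, K r)
    rw [Finset.prod_eq_prod_Ico_succ_bot ht]
    ring
  set N := L 0 with hN
  have hN1 : 1 ≤ N := le_trans hd (hLpos 0)
  obtain ⟨mlen, hmlen, P, hP⟩ := hyp N hN1
  set Pe : ℕ → ℤ := fun x => if h : x < mlen then P ⟨x, h⟩ else 0 with hPe
  set ε : ℕ → ℝ≥0∞ := fun t => if t = 0 then μ A else (((K (t-1)):ℝ≥0∞)^2)⁻¹ with hε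
  have hεpos : ∀ t, 0 < ε t := by
    intro t
    cases t with
    | zero => simpa [hε] using hA0
    | succ t =>
      show 0 < ε (t+1)
      have : ε (t+1) = (((K t):ℝ≥0∞)^2)⁻¹ := by simp [hε]
      rw [this]
      exact ENNReal.inv_pos.2 (ENNReal.pow_ne_top (ENNReal.natCast_ne_top _))
  have hKε : ∀ t, (2:ℝ≥0∞) ≤ (K t : ℝ≥0∞) * ε t := by
    intro t
    cases t with
    | zero => simpa [hε, hK, Kseq] using hK0
    | succ t =>
      have h1 : ε (t+1) = (((K t):ℝ≥0∞)^2)⁻¹ := by simp [hε]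
      have hKt : (K (t+1) : ℝ≥0∞) = 2 * ((K t : ℝ≥0∞))^2 := by
        show ((2 * (K t)^2 : ℕ) : ℝ≥0∞) = _
        push_cast
        ring
      have hKne0 : ((K t : ℝ≥0∞))^2 ≠ 0 :=
        pow_ne_zero _ (Nat.cast_ne_zero.2 (by have := hK2 t; omega))
      rw [h1, hKt, mul_assoc,
        ENNReal.mul_inv_cancel hKne0 (ENNReal.pow_ne_top (ENNReal.natCast_ne_top _)), mul_one]
  -- main induction
  have key : ∀ t : ℕ, t ≤ d → ∃ (b : ℕ) (u v : ℕ → ℕ) (n : ℕ → ℤ) (B : Set Y),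
      MeasurableSet B ∧ ε t ≤ μ B ∧ d ∣ b ∧ b + L t ≤ N ∧
      (∀ s, s < t →
        d ∣ u s ∧ u s + d ≤ v s ∧ v s ≤ N ∧ u s ≤ b ∧ b + L t ≤ v s ∧
        n s = ∑ x ∈ (Finset.Ico (u s) (v s)).filter (fun x => x % d = s), Pe x) ∧
      (∀ s s', s ≤ s' → s' < t → u s ≤ u s' ∧ v s' ≤ v s) ∧
      (∀ S : Finset ℕ, (∀ x ∈ S, x < t) →
        B ⊆ zIter T.toEquiv (∑ s ∈ S, n s) ⁻¹' A) := by
    intro t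
    induction t with
    | zero =>
      intro _
      refine ⟨0, fun _ => 0, fun _ => 0, fun _ => 0, A, hA, le_of_eq (by simp [hε]),
        dvd_zero d, by simp [hN], ?_, ?_, ?_⟩
      · intro s hs; omega
      · intro s s' _ hs'; omega
      · intro S hS
        have hSe : S = ∅ :=
          Finset.eq_empty_of_forall_notMem (fun x hx => Nat.not_lt_zero _ (hS x hx))
        rw [hSe, Finset.sum_empty, zIter_zero_preimage]
    | succ t ih =>
      intro ht1
      have htd : t < d := ht1
      obtain ⟨b, u, v, n, B, hB, hμB, hdb, hbN, hinv, hnest, hrec⟩ := ih (le_of_lt htd)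
      have hLK : L t = K t * L (t+1) := hLsucc t htd
      set Lt := L (t+1) with hLt
      have hdLt : d ∣ Lt := hLd (t+1)
      have hdle : d ≤ Lt := hLpos (t+1)
      set c : Fin (K t) → ℤ :=
        fun i => ∑ x ∈ (Finset.Ico b (b + (i:ℕ) * Lt)).filter (fun x => x % d = t), Pe x with hc
      set C : Fin (K t) → Set Y := fun i => zIter T.toEquiv (c i) ⁻¹' B with hC
      have hCmeas : ∀ i, MeasurableSet (C i) := fun i => (mp_zIter T hT (c i)).measurable hB
      have hCμ : ∀ i, ε t ≤ μ (C i) := by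
        intro i
        have : μ (C i) = μ B := (mp_zIter T hT (c i)).measure_preimage hB.nullMeasurableSet
        rw [this]
        exact hμB
      obtain ⟨i, j, hij, hpair⟩ := pigeonhole_pairs μ (hK2 t) C hCmeas (ε t) hCμ (hKε t)
      set m0 : ℤ :=
        ∑ x ∈ (Finset.Ico (b + (i:ℕ) * Lt) (b + (j:ℕ) * Lt)).filter (fun x => x % d = t),
          Pe x with hm0
      have hijn : (i:ℕ) < (j:ℕ) := hij
      have hiK : (i:ℕ) < K t := i.isLt
      have hjK : (j:ℕ) ≤ K t := le_of_lt j.isLt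
      have hmul1 : ((i:ℕ)+1) * Lt ≤ K t * Lt := Nat.mul_le_mul_right Lt hiK
      have hmul2 : (j:ℕ) * Lt ≤ K t * Lt := Nat.mul_le_mul_right Lt hjK
      have hmul3 : ((i:ℕ)+1) * Lt ≤ (j:ℕ) * Lt := Nat.mul_le_mul_right Lt hijn
      have hADD : ((i:ℕ)+1) * Lt = (i:ℕ) * Lt + Lt := by ring
      have hcsum : c j = c i + m0 := by
        show ∑ x ∈ (Finset.Ico b (b + (j:ℕ) * Lt)).filter (fun x => x % d = t), Pe x = _
        have hsplit : Finset.Ico b (b + (j:ℕ) * Lt)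
            = Finset.Ico b (b + (i:ℕ) * Lt) ∪ Finset.Ico (b + (i:ℕ)*Lt) (b + (j:ℕ)*Lt) :=
          (Finset.Ico_union_Ico_eq_Ico (Nat.le_add_right _ _)
            (by have := hmul3; omega)).symm
        rw [hsplit, Finset.filter_union, Finset.sum_union
          (Finset.disjoint_filter_filter (Finset.Ico_disjoint_Ico_consecutive _ _ _))]
      set B' : Set Y := B ∩ zIter T.toEquiv m0 ⁻¹' B with hB'
      have hmeas2 : MeasurableSet B' := hB.inter ((mp_zIter T hT m0).measurable hB)
      have hμB' : ε (t+1) ≤ μ B' := by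
        have hCi : C i ∩ C j = zIter T.toEquiv (c i) ⁻¹' B' := by
          show zIter T.toEquiv (c i) ⁻¹' B ∩ zIter T.toEquiv (c j) ⁻¹' B = _
          rw [hB', Set.preimage_inter, zIter_preimage_comp, ← hcsum]
        have hpres : μ (zIter T.toEquiv (c i) ⁻¹' B') = μ B' :=
          (mp_zIter T hT (c i)).measure_preimage hmeas2.nullMeasurableSet
        have hεt1 : ε (t+1) = (((K t):ℝ≥0∞)^2)⁻¹ := by simp [hε]
        rw [hεt1]
        calc (((K t):ℝ≥0∞)^2)⁻¹ ≤ μ (C i ∩ C j) := hpair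
          _ = μ B' := by rw [hCi, hpres]
      have hstep : b + (i:ℕ)*Lt + L (t+1) ≤ b + L t := by
        have : (i:ℕ)*Lt + Lt ≤ K t * Lt := by omega
        omega
      refine ⟨b + (i:ℕ) * Lt, Function.update u t (b + (i:ℕ) * Lt),
        Function.update v t (b + (j:ℕ) * Lt), Function.update n t m0, B', hmeas2, hμB',
        ?_, ?_, ?_, ?_, ?_⟩
      · exact Nat.dvd_add hdb (Dvd.dvd.mul_left hdLt _)
      · calc b + (i:ℕ)*Lt + L (t+1) ≤ b + L t := hstep
          _ ≤ N := hbN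
      · intro s hs
        rcases Nat.lt_succ_iff_lt_or_eq.1 hs with hst | heq
        swap
        · have heq' : t = s := heq.symm
          subst heq'
          rw [Function.update_self, Function.update_self, Function.update_self]
          refine ⟨Nat.dvd_add hdb (Dvd.dvd.mul_left hdLt _), by omega, ?_, le_rfl, ?_, hm0⟩
          · calc b + (j:ℕ)*Lt ≤ b + K t * Lt := by omega
              _ = b + L t := by omega
              _ ≤ N := hbN
          · have : L (t+1) = Lt := rfl
            omega
        · have hne : s ≠ t := ne_of_lt hst
          rw [Function.update_of_ne hne, Function.update_of_ne hne, Function.update_of_ne hne]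
          obtain ⟨h1, h2, h3, h4, h5, h6⟩ := hinv s hst
          exact ⟨h1, h2, h3, le_trans h4 (Nat.le_add_right _ _),
            le_trans hstep h5, h6⟩
      · intro s s' hss' hs'
        rcases Nat.lt_succ_iff_lt_or_eq.1 hs' with hst | heq
        swap
        · have heq' : t = s' := heq.symm
          subst heq'
          by_cases hseq : s = t
          · subst hseq
            exact ⟨le_rfl, le_rfl⟩
          · have hst : s < t := lt_of_le_of_ne hss' hseq
            obtain ⟨h1, h2, h3, h4, h5, h6⟩ := hinv s hst
            constructor
            · rw [Function.update_of_ne hseq, Function.update_self]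
              exact le_trans h4 (Nat.le_add_right _ _)
            · rw [Function.update_of_ne hseq, Function.update_self]
              calc b + (j:ℕ)*Lt ≤ b + K t * Lt := by omega
                _ = b + L t := by omega
                _ ≤ v s := h5
        · have h1 : s ≠ t := by omega
          have h2 : s' ≠ t := by omega
          rw [Function.update_of_ne h1, Function.update_of_ne h2,
            Function.update_of_ne h1, Function.update_of_ne h2]
          exact hnest s s' hss' hst
      · intro S hS
        by_cases htS : t ∈ S
        · have hsplit : ∑ s ∈ S, Function.update n t m0 s = m0 + ∑ s ∈ S.erase t, n s := by
            rw [← Finset.add_sum_erase _ _ htS]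
            congr 1
            · exact Function.update_self t m0 n
            · refine Finset.sum_congr rfl (fun x hx => ?_)
              exact Function.update_of_ne (Finset.ne_of_mem_erase hx) m0 n
          rw [hsplit]
          intro y hy
          have hyB : zIter T.toEquiv m0 y ∈ B := hy.2
          have hrec' := hrec (S.erase t) (fun x hx => by
            have h1 := hS x (Finset.mem_of_mem_erase hx)
            have h2 : x ≠ t := Finset.ne_of_mem_erase hx
            omega)
          have hm : zIter T.toEquiv m0 y
              ∈ zIter T.toEquiv (∑ s ∈ S.erase t, n s) ⁻¹' A := hrec' hyB
          show y ∈ zIter T.toEquiv (m0 + ∑ s ∈ S.erase t, n s) ⁻¹' A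
          rw [← zIter_preimage_comp]
          exact hm
        · have hsame : ∑ s ∈ S, Function.update n t m0 s = ∑ s ∈ S, n s :=
            Finset.sum_congr rfl (fun x hx =>
              Function.update_of_ne (fun h => htS (by rwa [h] at hx)) m0 n)
          rw [hsame]
          intro y hy
          exact hrec S (fun x hx => by
            have h1 := hS x hx
            have h2 : x ≠ t := fun h => htS (by rwa [h] at hx)
            omega) hy.1
  -- assemble
  obtain ⟨b, u, v, n, B, hB, hμB, _, _, hinv, hnest, hrec⟩ := key d le_rfl
  refine ⟨fun s => n (s : ℕ), ?_, ?_⟩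
  · rintro m' ⟨I, hIne, rfl⟩
    set S := I.image Fin.val with hS
    have hSsub : ∀ x ∈ S, x < d := by
      intro x hx
      obtain ⟨s, _, rfl⟩ := Finset.mem_image.1 hx
      exact s.isLt
    have hSne : S.Nonempty := hIne.image _
    set E : ℕ → Finset ℕ :=
      fun s => (Finset.Ico (u s) (v s)).filter (fun x => x % d = s) with hE
    have hdisj : (↑S : Set ℕ).PairwiseDisjoint E := by
      intro a _ b _ hab
      refine Finset.disjoint_left.2 (fun x hxa hxb => ?_)
      have h1 := (Finset.mem_filter.1 hxa).2
      have h2 := (Finset.mem_filter.1 hxb).2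
      exact hab (by omega)
    have hUsum : ∑ x ∈ S.biUnion E, Pe x = ∑ s ∈ S, ∑ x ∈ E s, Pe x :=
      Finset.sum_biUnion hdisj
    have hEn : ∀ s ∈ S, ∑ x ∈ E s, Pe x = n s := fun s hs =>
      ((hinv s (hSsub s hs)).2.2.2.2.2).symm
    have hIsum : ∑ s ∈ I, n (s : ℕ) = ∑ x ∈ S, n x :=
      (Finset.sum_image (fun a _ b _ h => Fin.val_injective h)).symm
    have hUne : (S.biUnion E).Nonempty := by
      obtain ⟨t, htS⟩ := hSne
      obtain ⟨h1, h2, h3, _, _, _⟩ := hinv t (hSsub t htS)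
      refine ⟨u t + t, Finset.mem_biUnion.2 ⟨t, htS, Finset.mem_filter.2
        ⟨Finset.mem_Ico.2 ⟨Nat.le_add_right _ _, by have := hSsub t htS; omega⟩, ?_⟩⟩⟩
      obtain ⟨q, hq⟩ := h1
      rw [hq, Nat.add_comm (d * q) t, Nat.add_mul_mod_self_left]
      exact Nat.mod_eq_of_lt (hSsub t htS)
    have hUbd : ∀ x ∈ S.biUnion E, x < mlen := by
      intro x hx
      obtain ⟨t, htS, hxt⟩ := Finset.mem_biUnion.1 hx
      have h3 := (hinv t (hSsub t htS)).2.2.1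
      have h4 := (Finset.mem_Ico.1 (Finset.mem_filter.1 hxt).1).2
      omega
    have hUgap := union_gap d u v S hSsub
      (fun t ht => (hinv t (hSsub t ht)).2.1)
      (fun t ht t' ht' htt' => hnest t t' htt' (hSsub t' ht'))
    have hmem := sg_mem_of_gap P d (S.biUnion E) hUne hUbd hUgap
    have heq : ∑ x ∈ S.biUnion E, (if h : x < mlen then P ⟨x, h⟩ else 0)
        = ∑ i ∈ I, n (i : ℕ) := by
      rw [show (fun x : ℕ => if h : x < mlen then P ⟨x, h⟩ else 0) = Pe from rfl]
      rw [hUsum, hIsum]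
      exact Finset.sum_congr rfl hEn
    rw [← heq]
    exact hP hmem
  · have hBA : B ⊆ A := by
      have := hrec ∅ (by simp)
      simpa [Finset.sum_empty, zIter_zero_preimage] using this
    have hsub : B ⊆ A ∩ ⋂ m' ∈ FS (fun s : Fin d => n (s : ℕ)),
        zIter T.toEquiv m' ⁻¹' A := by
      refine Set.subset_inter hBA (Set.subset_iInter₂ ?_)
      rintro m' ⟨I, hIne, rfl⟩
      have hIsum : ∑ s ∈ I, n (s : ℕ) = ∑ x ∈ I.image Fin.val, n x :=
        (Finset.sum_image (fun a _ b _ h => Fin.val_injective h)).symm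
      rw [hIsum]
      exact hrec _ (fun x hx => by
        obtain ⟨s, _, rfl⟩ := Finset.mem_image.1 hx
        exact s.isLt)
    calc (0:ℝ≥0∞) < ε d := hεpos d
      _ ≤ μ B := hμB
      _ ≤ _ := measure_mono hsub

end Master

/-- Every set containing an `SG_d`-set (and even every set containing
arbitrarily long finite `SG_d`-sets) is a Poincaré recurrence set of order `d`. -/
theorem statement12 (d : ℕ) (hd : 1 ≤ d) (F : Set ℤ) :
    ((∃ P : ℕ → ℤ, SG d P ⊆ F) → PoincareRecSet d F) ∧
    ((∀ k : ℕ, 1 ≤ k → ∃ m : ℕ, k ≤ m ∧ ∃ P : Fin m → ℤ, SGfin d P ⊆ F) →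
      PoincareRecSet d F) := by
  constructor
  · rintro ⟨P, hP⟩
    apply master d hd F
    intro k _
    refine ⟨k, le_rfl, fun i => P (i : ℕ), ?_⟩
    rintro x ⟨k', i, hmono, hgap, rfl⟩
    apply hP
    exact ⟨k', fun t => ((i t : ℕ)), fun a b hab => hmono hab, hgap, rfl⟩
  · exact master d hd F
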